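/- arXiv:1710.03517 — 2 statements merged into one kernel-verified Lean document; each statement's English description precedes it below -/
import Mathlib

section
/- For every natural number n ≥ 2, the n-th group homology of the additive group of rational numbers ℚ with coefficients in the integers ℤ equipped with the trivial ℚ-action vanishes, i.e. Hₙ(Bℚ; ℤ) = 0 for all n ≥ 2. -/
open CategoryTheory CategoryTheory.Limits

noncomputable section

/-- The augmentation ring homomorphism `ℤ[G] → ℤ` of the integral group ring of an
additive abelian group `G`, sending each group element to `1`. -/
def augmentationℤ (G : Type) [AddCommGroup G] : AddMonoidAlgebra ℤ G →+* ℤ :=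
  ((AddMonoidAlgebra.lift ℤ ℤ G) 1).toRingHom

/-- An abelian group `A`, viewed as a module over the integral group ring `ℤ[G]` via the
augmentation, i.e. with the trivial `G`-action. -/
def trivialModule (G : Type) [AddCommGroup G] (A : Type) [AddCommGroup A] :
    Module (AddMonoidAlgebra ℤ G) A :=
  Module.compHom A (augmentationℤ G)

/-- The `n`-th group homology `Hₙ(BG; A)` of an additive abelian group `G` with coefficients
in an abelian group `A` equipped with the trivial `G`-action, defined as
`Torₙ^{ℤ[G]}(ℤ, A)`, where both `ℤ` and `A` carry the trivial `G`-action (i.e. the module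
structure induced by the augmentation `ℤ[G] → ℤ`). -/
def groupHomologyTriv (G : Type) [AddCommGroup G] (A : Type) [AddCommGroup A] (n : ℕ) :
    ModuleCat (AddMonoidAlgebra ℤ G) :=
  letI := trivialModule G ℤ
  letI := trivialModule G A
  ((Tor (ModuleCat (AddMonoidAlgebra ℤ G)) n).obj
      (ModuleCat.of (AddMonoidAlgebra ℤ G) ℤ)).obj (ModuleCat.of (AddMonoidAlgebra ℤ G) A)

namespace HQZaux

abbrev R : Type := AddMonoidAlgebra ℤ ℚ

def ε : R →+* ℤ := augmentationℤ ℚ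

def Ztriv : Type := ℤ

instance : AddCommGroup Ztriv := inferInstanceAs (AddCommGroup ℤ)
instance : Module R Ztriv := trivialModule ℚ ℤ

def vz (z : ℤ) : Ztriv := z
def zv (z : Ztriv) : ℤ := z

lemma smul_z (r : R) (z : Ztriv) : r • z = vz (ε r * zv z) := rfl

lemma ε_single (a : ℚ) (b : ℤ) : ε (AddMonoidAlgebra.single a b) = b := by
  simp [ε, augmentationℤ, AddMonoidAlgebra.lift_single]

lemma ε_apply (r : R) : ε r = r.coeff.sum fun _ b => b := by
  simp [ε, augmentationℤ, AddMonoidAlgebra.lift_apply]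

def q (n : ℕ) : ℚ := ((n+1).factorial : ℚ)⁻¹

lemma q_ne_zero (n : ℕ) : q n ≠ 0 := by
  simp only [q, ne_eq, inv_eq_zero, Nat.cast_eq_zero]
  positivity

lemma q_succ (n : ℕ) : ((n+2 : ℕ) : ℚ) * q (n+1) = q n := by
  rw [q, q]
  rw [show (n+1+1).factorial = (n+2) * (n+1).factorial from Nat.factorial_succ (n+1)]
  have h1 : ((n+1).factorial : ℚ) ≠ 0 := by positivity
  push_cast
  field_simp

def x (n : ℕ) : R := AddMonoidAlgebra.single (q n) 1

def σ (n : ℕ) : R := ∑ k ∈ Finset.range (n+2), AddMonoidAlgebra.single ((k : ℚ) * q (n+1)) 1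

lemma key (n : ℕ) : (x (n+1) - 1) * σ n = x n - 1 := by
  have h : (x (n+1) - 1) * σ n =
      ∑ k ∈ Finset.range (n+2),
        (AddMonoidAlgebra.single (((k+1 : ℕ) : ℚ) * q (n+1)) (1:ℤ)
          - AddMonoidAlgebra.single ((k : ℚ) * q (n+1)) 1) := by
    rw [sub_mul, one_mul, σ, Finset.mul_sum]
    rw [← Finset.sum_sub_distrib]
    refine Finset.sum_congr rfl fun k _ => ?_
    rw [x, AddMonoidAlgebra.single_mul_single, one_mul]
    congr 2
    push_cast
    ring
  rw [h, Finset.sum_range_sub (f := fun k => AddMonoidAlgebra.single ((k : ℚ) * q (n+1)) (1:ℤ))]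
  simp only [Nat.cast_zero, zero_mul]
  rw [q_succ]
  rw [x, AddMonoidAlgebra.one_def]

lemma ε_x (n : ℕ) : ε (x n) = 1 := ε_single _ _

lemma ε_σ (n : ℕ) : ε (σ n) = (n+2 : ℕ) := by
  rw [σ, map_sum]
  simp [ε_single]

lemma x_sub_one_ne_zero (n : ℕ) : x n - 1 ≠ 0 := by
  intro h
  have h2 : ((x n - 1 : R)).coeff (q n) = 1 := by
    rw [x, AddMonoidAlgebra.one_def, AddMonoidAlgebra.coeff_sub, AddMonoidAlgebra.coeff_single,
      AddMonoidAlgebra.coeff_single, Finsupp.sub_apply, Finsupp.single_apply,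
      Finsupp.single_apply, if_pos rfl, if_neg (fun h' => q_ne_zero n h'.symm)]
    ring
  rw [h] at h2
  exact one_ne_zero h2.symm

abbrev M1 : Type := ℕ →₀ R

def d1 : M1 →ₗ[R] R := Finsupp.linearCombination R (fun n => x n - 1)

def d2 : M1 →ₗ[R] M1 := Finsupp.linearCombination R
  (fun n => Finsupp.single n (1:R) - Finsupp.single (n+1) (σ n))

def εₗ : R →ₗ[R] Ztriv where
  toFun r := (ε r : ℤ)
  map_add' := map_add ε
  map_smul' r s := map_mul ε r s

lemma εₗ_apply (r : R) : εₗ r = (ε r : ℤ) := rfl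

lemma d1_single (n : ℕ) (r : R) : d1 (Finsupp.single n r) = r * (x n - 1) := by
  rw [d1, Finsupp.linearCombination_single, smul_eq_mul]

lemma d2_single (n : ℕ) (r : R) :
    d2 (Finsupp.single n r) = Finsupp.single n r - Finsupp.single (n+1) (r * σ n) := by
  rw [d2, Finsupp.linearCombination_single, smul_sub, Finsupp.smul_single, Finsupp.smul_single,
    smul_eq_mul, smul_eq_mul, mul_one]

lemma d1_d2 (v : M1) : d1 (d2 v) = 0 := by
  induction v using Finsupp.induction_linear with
  | zero => simp
  | add f g hf hg => rw [map_add, map_add, hf, hg, add_zero]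
  | single n r =>
    rw [d2_single, map_sub, d1_single, d1_single, mul_assoc, mul_comm (σ n), key]
    ring

lemma εₗ_d1 (v : M1) : εₗ (d1 v) = 0 := by
  induction v using Finsupp.induction_linear with
  | zero => simp
  | add f g hf hg => rw [map_add, map_add, hf, hg, add_zero]
  | single n r =>
    rw [d1_single, εₗ_apply, map_mul, map_sub, ε_x, map_one, sub_self, mul_zero]
    rfl



/-! ### Exactness lemmas -/

/-- The subgroup of rationals `a` with `single a 1 - 1` in the image of `d1`. -/
def Kgrp : AddSubgroup ℚ where
  carrier := {a : ℚ | (AddMonoidAlgebra.single a 1 - 1 : R) ∈ LinearMap.range d1}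
  zero_mem' := by
    simp only [Set.mem_setOf_eq, ← AddMonoidAlgebra.one_def, sub_self]
    exact Submodule.zero_mem _
  add_mem' := by
    intro a b ha hb
    simp only [Set.mem_setOf_eq] at ha hb ⊢
    have h : (AddMonoidAlgebra.single (a+b) 1 - 1 : R) =
        AddMonoidAlgebra.single a 1 * (AddMonoidAlgebra.single b 1 - 1)
          + (AddMonoidAlgebra.single a 1 - 1) := by
      rw [mul_sub, AddMonoidAlgebra.single_mul_single, mul_one, mul_one]
      ring
    rw [h]
    exact Submodule.add_mem _ (Submodule.smul_mem _ _ hb) ha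
  neg_mem' := by
    intro a ha
    simp only [Set.mem_setOf_eq] at ha ⊢
    have h : (AddMonoidAlgebra.single (-a) 1 - 1 : R) =
        (- AddMonoidAlgebra.single (-a) 1) * (AddMonoidAlgebra.single a 1 - 1) := by
      rw [neg_mul, mul_sub, AddMonoidAlgebra.single_mul_single, mul_one, mul_one,
        neg_add_cancel, ← AddMonoidAlgebra.one_def]
      ring
    rw [h]
    exact Submodule.smul_mem _ _ ha

lemma q_mem_Kgrp (n : ℕ) : q n ∈ Kgrp := by
  show (AddMonoidAlgebra.single (q n) 1 - 1 : R) ∈ LinearMap.range d1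
  exact ⟨Finsupp.single n 1, by rw [d1_single, one_mul, x]⟩

lemma mem_Kgrp (a : ℚ) : a ∈ Kgrp := by
  have hd : a.den ∣ a.den.factorial := Nat.dvd_factorial a.pos rfl.le
  obtain ⟨c, hc⟩ := hd
  have hn : a.den - 1 + 1 = a.den := Nat.succ_pred_eq_of_pos a.pos
  have hF : (a.den.factorial : ℚ) = (a.den : ℚ) * c := by exact_mod_cast hc
  have hDen : (a.den : ℚ) ≠ 0 := by exact_mod_cast a.den_nz
  have hC : (c : ℚ) ≠ 0 := by
    intro h0
    rw [h0, mul_zero] at hF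
    exact (Nat.cast_ne_zero.mpr a.den.factorial_ne_zero) hF
  have hq : (a.num * c) • q (a.den - 1) = a := by
    rw [q, hn, zsmul_eq_mul, hF]
    push_cast
    rw [mul_inv, show (a.num:ℚ) * c * ((a.den:ℚ)⁻¹ * (c:ℚ)⁻¹)
        = ((a.num:ℚ) * (a.den:ℚ)⁻¹) * ((c:ℚ) * (c:ℚ)⁻¹) by ring,
      mul_inv_cancel₀ hC, mul_one, ← div_eq_mul_inv, Rat.num_div_den]
  rw [← hq]
  exact AddSubgroup.zsmul_mem Kgrp (q_mem_Kgrp _) _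

/-- Surjectivity of the augmentation. -/
lemma εₗ_surjective : Function.Surjective εₗ := by
  intro z
  exact ⟨AddMonoidAlgebra.single 0 (zv z), by rw [εₗ_apply, ε_single]; rfl⟩

/-- Exactness at degree 0 : the kernel of the augmentation is the image of `d1`. -/
lemma exact_at_zero (r : R) (hr : εₗ r = 0) : ∃ v : M1, d1 v = r := by
  rw [← LinearMap.mem_range]
  have hsum : ε r = 0 := congrArg zv hr
  have hrepr : r = r.coeff.sum (fun a b => b • (AddMonoidAlgebra.single a 1 - 1 : R))
      + (r.coeff.sum fun _ b => b) • (1 : R) := by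
    rw [show (r.coeff.sum fun a b => b • (AddMonoidAlgebra.single a 1 - 1 : R))
        = r.coeff.sum (fun a b => b • (AddMonoidAlgebra.single a (1:ℤ)))
          - r.coeff.sum (fun a b => b • (1:R)) by
      rw [← Finsupp.sum_sub]; exact Finsupp.sum_congr fun a _ => smul_sub _ _ _]
    have h1 : r.coeff.sum (fun a b => b • (AddMonoidAlgebra.single a (1:ℤ))) = r := by
      conv_rhs => rw [← AddMonoidAlgebra.sum_coeff_single r]
      exact Finsupp.sum_congr fun a _ => by
        rw [AddMonoidAlgebra.smul_single, smul_eq_mul, mul_one]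
    have h2 : (r.coeff.sum fun _ b => b) • (1 : R) = r.coeff.sum (fun a b => b • (1:R)) := by
      rw [Finsupp.sum, Finsupp.sum, Finset.sum_smul]
    rw [h1, ← h2]
    ring
  rw [hrepr, ← ε_apply, hsum, zero_smul, add_zero]
  refine Submodule.finsuppSum_mem _ _ _ _ fun a _ => ?_
  exact Submodule.smul_of_tower_mem _ (r.coeff a) (mem_Kgrp a)

/-- Injectivity of `d2`. -/
lemma d2_injective (v : M1) (hv : d2 v = 0) : v = 0 := by
  have hrepr : d2 v = v - v.sum fun n r => Finsupp.single (n+1) (r * σ n) := by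
    rw [d2, Finsupp.linearCombination_apply]
    rw [show (v.sum fun n r => r • ((Finsupp.single n (1:R)) - Finsupp.single (n+1) (σ n)))
        = v.sum (fun n r => Finsupp.single n r) - v.sum (fun n r => Finsupp.single (n+1) (r * σ n))
        by
      rw [← Finsupp.sum_sub]
      refine Finsupp.sum_congr fun n _ => ?_
      rw [smul_sub, Finsupp.smul_single, Finsupp.smul_single, smul_eq_mul, smul_eq_mul, mul_one]]
    rw [Finsupp.sum_single]
  rw [hrepr, sub_eq_zero] at hv
  have hcoef : ∀ m : ℕ, v m = (v.sum fun n r => Finsupp.single (n+1) (r * σ n)) m := by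
    intro m; rw [← hv]
  have h0 : v 0 = 0 := by
    rw [hcoef 0, Finsupp.sum_apply, Finsupp.sum]
    refine Finset.sum_eq_zero fun n _ => ?_
    rw [Finsupp.single_apply, if_neg (Nat.succ_ne_zero n)]
  have hstep : ∀ m : ℕ, v (m+1) = v m * σ m := by
    intro m
    rw [hcoef (m+1), Finsupp.sum_apply]
    rw [show (v.sum fun n r => (Finsupp.single (n+1) (r * σ n)) (m+1))
        = v.sum fun n r => if n = m then r * σ n else 0 by
      refine Finsupp.sum_congr fun n _ => ?_
      rw [Finsupp.single_apply]
      simp only [Nat.add_right_cancel_iff]]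
    by_cases hm : m ∈ v.support
    · rw [Finsupp.sum_ite_eq' v m (fun n r => r * σ n), if_pos hm]
    · rw [Finsupp.sum_ite_eq' v m (fun n r => r * σ n), if_neg hm]
      rw [Finsupp.notMem_support_iff.mp hm, zero_mul]
  have hall : ∀ m, v m = 0 := by
    intro m
    induction m with
    | zero => exact h0
    | succ k ih => rw [hstep k, ih, zero_mul]
  exact Finsupp.ext hall

/-- Exactness at degree 1. -/
lemma exact_at_one (v : M1) (hv : d1 v = 0) : ∃ w : M1, d2 w = v := by
  rw [← LinearMap.mem_range]
  have hshift : ∀ n N : ℕ, n ≤ N → ∃ t : R,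
      (Finsupp.single n (1:R) - Finsupp.single N t) ∈ LinearMap.range d2 := by
    intro n N hnN
    induction N, hnN using Nat.le_induction with
    | base =>
      exact ⟨1, by simpa using Submodule.zero_mem _⟩
    | succ N hnN ih =>
      obtain ⟨t, ht1⟩ := ih
      refine ⟨t * σ N, ?_⟩
      have hdecomp : Finsupp.single n (1:R) - Finsupp.single (N+1) (t * σ N)
          = (Finsupp.single n (1:R) - Finsupp.single N t) + d2 (Finsupp.single N t) := by
        rw [d2_single]
        exact (sub_add_sub_cancel _ _ _).symm
      rw [hdecomp]
      exact Submodule.add_mem _ ht1 (LinearMap.mem_range_self _ _)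
  set N := v.support.sup id with hN
  have hbound : ∀ n ∈ v.support, n ≤ N := fun n hn => Finset.le_sup (f := id) hn
  set tfun : ℕ → R := fun n => if h : n ≤ N then (hshift n N h).choose else 0 with htfun
  have htmem : ∀ n, n ≤ N →
      (Finsupp.single n (1:R) - Finsupp.single N (tfun n)) ∈ LinearMap.range d2 := by
    intro n hn
    rw [htfun]
    simp only [dif_pos hn]
    exact (hshift n N hn).choose_spec
  set c : R := ∑ n ∈ v.support, v n * tfun n with hc
  have key1 : v - Finsupp.single N c ∈ LinearMap.range d2 := by
    have hv2 : v - Finsupp.single N c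
        = ∑ n ∈ v.support, (v n) • (Finsupp.single n (1:R) - Finsupp.single N (tfun n)) := by
      rw [show (∑ n ∈ v.support, (v n) • (Finsupp.single n (1:R) - Finsupp.single N (tfun n)))
          = ∑ n ∈ v.support, (Finsupp.single n (v n) - Finsupp.single N (v n * tfun n)) from
        Finset.sum_congr rfl fun n _ => by
          rw [smul_sub, Finsupp.smul_single, Finsupp.smul_single, smul_eq_mul, smul_eq_mul,
            mul_one]]
      rw [Finset.sum_sub_distrib]
      congr 1
      · exact (Finsupp.sum_single v).symm
      · rw [hc, Finsupp.single_finset_sum]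
    rw [hv2]
    exact Submodule.sum_mem _ fun n hn => Submodule.smul_mem _ _ (htmem n (hbound n hn))
  have key2 : c * (x N - 1) = 0 := by
    obtain ⟨w, hw⟩ := key1
    have h1 : d1 (v - Finsupp.single N c) = 0 := by rw [← hw, d1_d2]
    rw [map_sub, hv, d1_single, zero_sub, neg_eq_zero] at h1
    exact h1
  have hc0 : c = 0 := by
    rcases mul_eq_zero.mp key2 with h | h
    · exact h
    · exact absurd h (x_sub_one_ne_zero N)
  rw [hc0, Finsupp.single_zero, sub_zero] at key1
  exact key1


/-! ### The projective resolution -/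

def Zmod : ModuleCat R := ModuleCat.of R Ztriv

def XP : ℕ → ModuleCat R
  | 0 => ModuleCat.of R R
  | 1 => ModuleCat.of R M1
  | 2 => ModuleCat.of R M1
  | _+3 => ModuleCat.of R PUnit

def dP : ∀ n : ℕ, XP (n+1) ⟶ XP n
  | 0 => ModuleCat.ofHom d1
  | 1 => ModuleCat.ofHom d2
  | _+2 => 0

lemma sqP : ∀ n : ℕ, dP (n+1) ≫ dP n = 0 := by
  intro n
  match n with
  | 0 =>
    apply ModuleCat.hom_ext
    apply LinearMap.ext
    intro v
    exact d1_d2 v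
  | 1 => exact zero_comp
  | n+2 => exact zero_comp

def P : ChainComplex (ModuleCat R) ℕ := ChainComplex.of XP dP sqP

lemma P_d10 : P.d 1 0 = ModuleCat.ofHom d1 := ChainComplex.of_d XP dP 0
lemma P_d21 : P.d 2 1 = ModuleCat.ofHom d2 := ChainComplex.of_d XP dP 1
lemma P_d32 : P.d 3 2 = 0 := ChainComplex.of_d XP dP 2

instance P_projective : ∀ n : ℕ, Projective (P.X n) := by
  intro n
  match n with
  | 0 => exact ModuleCat.projective_of_free (Module.Basis.singleton PUnit.{1} R)
  | 1 => exact ModuleCat.projective_of_free (Finsupp.basisSingleOne (R := R) (ι := ℕ))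
  | 2 => exact ModuleCat.projective_of_free (Finsupp.basisSingleOne (R := R) (ι := ℕ))
  | n+3 => exact ModuleCat.projective_of_free (Module.Basis.empty (ι := Empty) PUnit)

lemma d10_eps : P.d 1 0 ≫ ModuleCat.ofHom εₗ = 0 := by
  rw [P_d10]
  apply ModuleCat.hom_ext
  apply LinearMap.ext
  intro v
  exact εₗ_d1 v

def πP : P ⟶ (ChainComplex.single₀ (ModuleCat R)).obj Zmod :=
  (ChainComplex.toSingle₀Equiv P Zmod).symm ⟨ModuleCat.ofHom εₗ, d10_eps⟩

lemma πP_f_zero : πP.f 0 = ModuleCat.ofHom εₗ :=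
  ChainComplex.toSingle₀Equiv_symm_apply_f_zero _ _

lemma P_exactAt_succ (n : ℕ) : P.ExactAt (n+1) := by
  match n with
  | 0 =>
    rw [HomologicalComplex.exactAt_iff' _ 2 1 0 (by simp) (by simp)]
    rw [ShortComplex.moduleCat_exact_iff]
    intro v hv
    have hv' : d1 v = 0 := by
      have := hv
      rw [show (P.sc' 2 1 0).g = P.d 1 0 from rfl, P_d10] at this
      exact this
    obtain ⟨w, hw⟩ := exact_at_one v hv'
    refine ⟨w, ?_⟩
    rw [show (P.sc' 2 1 0).f = P.d 2 1 from rfl, P_d21]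
    exact hw
  | 1 =>
    rw [HomologicalComplex.exactAt_iff' _ 3 2 1 (by simp) (by simp)]
    rw [ShortComplex.moduleCat_exact_iff]
    intro v hv
    have hv' : d2 v = 0 := by
      have := hv
      rw [show (P.sc' 3 2 1).g = P.d 2 1 from rfl, P_d21] at this
      exact this
    refine ⟨0, ?_⟩
    rw [map_zero, d2_injective v hv']
    rfl
  | n+2 =>
    rw [HomologicalComplex.exactAt_iff]
    exact ShortComplex.exact_of_isZero_X₂ _
      (ModuleCat.isZero_of_subsingleton (ModuleCat.of R PUnit))

def projRes : ProjectiveResolution Zmod where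
  complex := P
  π := πP
  quasiIso := ⟨fun n => by
    cases n with
    | zero =>
      rw [ChainComplex.quasiIsoAt₀_iff, ShortComplex.quasiIso_iff_of_zeros']
      rotate_left
      · rfl
      · rfl
      · rfl
      constructor
      · rw [ShortComplex.moduleCat_exact_iff]
        intro r hr
        have hr' : εₗ r = 0 := hr
        obtain ⟨v, hv⟩ := exact_at_zero r hr'
        exact ⟨v, hv⟩
      · have hsurj : Epi (ModuleCat.ofHom εₗ) := by
          rw [ModuleCat.epi_iff_surjective]
          exact εₗ_surjective
        exact hsurj
    | succ n =>
      rw [quasiIsoAt_iff_exactAt' πP (n+1) (ChainComplex.exactAt_succ_single_obj _ _)]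
      exact P_exactAt_succ n⟩


/-! ### The tensored complex -/

open MonoidalCategory in
def F : ModuleCat R ⥤ ModuleCat R := (MonoidalCategory.tensoringLeft (ModuleCat R)).obj Zmod

instance : F.Additive := by unfold F; infer_instance

def mapped : ChainComplex (ModuleCat R) ℕ :=
  (F.mapHomologicalComplex (ComplexShape.down ℕ)).obj P

def e : TensorProduct R Ztriv M1 ≃ₗ[R] (ℕ →₀ Ztriv) :=
  TensorProduct.finsuppScalarRight R R Ztriv ℕ

def D2comp (n : ℕ) : Ztriv →+ (ℕ →₀ Ztriv) :=
  AddMonoidHom.mk' (fun z => Finsupp.single n z - Finsupp.single (n+1) (vz (((n:ℤ)+2) * zv z)))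
    (by
      intro a b
      have hz : vz (((n:ℤ)+2) * zv (a+b))
          = vz (((n:ℤ)+2) * zv a) + vz (((n:ℤ)+2) * zv b) := by
        show vz (((n:ℤ)+2) * (zv a + zv b)) = _
        rw [mul_add]
        rfl
      rw [hz, Finsupp.single_add, Finsupp.single_add]
      abel)

def D2 : (ℕ →₀ Ztriv) →+ (ℕ →₀ Ztriv) := Finsupp.liftAddHom D2comp

lemma D2_single (n : ℕ) (z : Ztriv) :
    D2 (Finsupp.single n z)
      = Finsupp.single n z - Finsupp.single (n+1) (vz (((n:ℤ)+2) * zv z)) := by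
  rw [D2, Finsupp.liftAddHom_apply_single]
  rfl

lemma e_tmul_single (z : Ztriv) (n : ℕ) (r : R) :
    e (z ⊗ₜ[R] Finsupp.single n r) = Finsupp.single n (r • z) := by
  rw [e, TensorProduct.finsuppScalarRight_apply_tmul]
  rw [Finsupp.sum_single_index]
  rw [zero_smul, Finsupp.single_zero]

lemma e_comm (t : TensorProduct R Ztriv M1) :
    e (LinearMap.lTensor Ztriv d2 t) = D2 (e t) := by
  induction t using TensorProduct.induction_on with
  | zero => rw [map_zero, map_zero, map_zero]
  | add a b ha hb => rw [map_add, map_add, map_add, map_add, ha, hb]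
  | tmul z v =>
    induction v using Finsupp.induction_linear with
    | zero => simp
    | add f g hf hg =>
      rw [TensorProduct.tmul_add, map_add, map_add, map_add, map_add, hf, hg]
    | single n r =>
      rw [LinearMap.lTensor_tmul, d2_single, TensorProduct.tmul_sub, map_sub,
        e_tmul_single, e_tmul_single, D2_single]
      congr 1
      congr 1
      show vz (ε (r * σ n) * zv z) = vz (((n:ℤ)+2) * zv (vz (ε r * zv z)))
      rw [map_mul, ε_σ]
      show vz ((ε r * ((n:ℕ)+2 : ℕ)) * zv z) = vz (((n:ℤ)+2) * (ε r * zv z))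
      congr 1
      push_cast
      ring

lemma D2_injective (b : ℕ →₀ Ztriv) (hb : D2 b = 0) : b = 0 := by
  have hrepr : D2 b = b - b.sum fun n z => Finsupp.single (n+1) (vz (((n:ℤ)+2) * zv z)) := by
    rw [D2, Finsupp.liftAddHom_apply]
    rw [show (b.sum fun n z => D2comp n z)
        = b.sum (fun n z => Finsupp.single n z)
          - b.sum (fun n z => Finsupp.single (n+1) (vz (((n:ℤ)+2) * zv z))) by
      rw [← Finsupp.sum_sub]
      exact Finsupp.sum_congr fun n _ => rfl]
    rw [Finsupp.sum_single]
  rw [hrepr, sub_eq_zero] at hb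
  have hcoef : ∀ m : ℕ,
      b m = (b.sum fun n z => Finsupp.single (n+1) (vz (((n:ℤ)+2) * zv z))) m := by
    intro m; rw [← hb]
  have h0 : b 0 = 0 := by
    rw [hcoef 0, Finsupp.sum_apply, Finsupp.sum]
    refine Finset.sum_eq_zero fun n _ => ?_
    rw [Finsupp.single_apply, if_neg (Nat.succ_ne_zero n)]
  have hstep : ∀ m : ℕ, b (m+1) = vz (((m:ℤ)+2) * zv (b m)) := by
    intro m
    rw [hcoef (m+1), Finsupp.sum_apply]
    rw [show (b.sum fun n z => (Finsupp.single (n+1) (vz (((n:ℤ)+2) * zv z))) (m+1))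
        = b.sum fun n z => if n = m then vz (((n:ℤ)+2) * zv z) else 0 by
      refine Finsupp.sum_congr fun n _ => ?_
      rw [Finsupp.single_apply]
      simp only [Nat.add_right_cancel_iff]]
    by_cases hm : m ∈ b.support
    · rw [Finsupp.sum_ite_eq' b m fun n z => vz (((n:ℤ)+2) * zv z), if_pos hm]
    · rw [Finsupp.sum_ite_eq' b m fun n z => vz (((n:ℤ)+2) * zv z), if_neg hm]
      rw [Finsupp.notMem_support_iff.mp hm]
      show (0:Ztriv) = vz (((m:ℤ)+2) * zv 0)
      show (0:Ztriv) = vz (((m:ℤ)+2) * 0)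
      rw [mul_zero]
      rfl
  have hall : ∀ m, b m = 0 := by
    intro m
    induction m with
    | zero => exact h0
    | succ k ih =>
      rw [hstep k, ih]
      show vz (((k:ℤ)+2) * 0) = 0
      rw [mul_zero]
      rfl
  exact Finsupp.ext hall

lemma mapped_exactAt (m : ℕ) : mapped.ExactAt (m+2) := by
  match m with
  | 0 =>
    rw [HomologicalComplex.exactAt_iff' _ 3 2 1 (by simp) (by simp)]
    rw [ShortComplex.moduleCat_exact_iff]
    intro t ht
    have ht' : LinearMap.lTensor Ztriv d2 t = 0 := ht
    have het : e t = 0 := by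
      refine D2_injective (e t) ?_
      have := e_comm t
      rw [ht', map_zero] at this
      exact this.symm
    have ht0 : t = 0 := by
      have := congrArg e.symm het
      have h2 := e.symm_apply_apply t
      rw [map_zero] at this
      exact h2.symm.trans this
    refine ⟨0, ?_⟩
    rw [map_zero, ht0]
  | m+1 =>
    rw [HomologicalComplex.exactAt_iff]
    refine ShortComplex.exact_of_isZero_X₂ _ ?_
    exact F.map_isZero (ModuleCat.isZero_of_subsingleton (ModuleCat.of R PUnit))

theorem final (n : ℕ) (hn : 2 ≤ n) :
    IsZero (((Tor (ModuleCat R) n).obj Zmod).obj Zmod) := by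
  obtain ⟨m, rfl⟩ : ∃ m, n = m + 2 := ⟨n - 2, by omega⟩
  have h := mapped_exactAt m
  rw [HomologicalComplex.exactAt_iff_isZero_homology] at h
  exact h.of_iso (projRes.isoLeftDerivedObj F (m+2))

end HQZaux

/-- For every `n ≥ 2`, the `n`-th group homology of the additive group `ℚ` with
coefficients in `ℤ` (trivial action) vanishes: `Hₙ(Bℚ; ℤ) = 0`. -/
theorem Hn_BQ_Z_isZero : ∀ n : ℕ, 2 ≤ n → IsZero (groupHomologyTriv ℚ ℤ n) := by
  intro n hn
  exact HQZaux.final n hn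
end
end

section
/- Let R = 𝔽₂[ℚ] be the group algebra of the additive group ℚ over the field 𝔽₂ with two elements, and let I = ker(ε) be the augmentation ideal, where ε : R → 𝔽₂ is the augmentation map. Then the augmentation ideal is idempotent: I² = I. -/
open CategoryTheory CategoryTheory.Limits

noncomputable section

/-- The group algebra `R = 𝔽₂[ℚ]` of the additive group `ℚ` over the field `𝔽₂ = ZMod 2`. -/
abbrev GroupRingF2Q : Type := AddMonoidAlgebra (ZMod 2) ℚ

/-- The augmentation map `ε : 𝔽₂[ℚ] → 𝔽₂`, the `𝔽₂`-algebra homomorphism sending each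
group element of `ℚ` to `1`, viewed as a ring homomorphism. -/
def augF2Q : GroupRingF2Q →+* ZMod 2 :=
  ((AddMonoidAlgebra.lift (ZMod 2) (ZMod 2) ℚ) 1).toRingHom

/-- `𝔽₂` regarded as a module over `R = 𝔽₂[ℚ]` via the augmentation `ε`. -/
instance : Module GroupRingF2Q (ZMod 2) := Module.compHom (ZMod 2) augF2Q

lemma augF2Q_single (q : ℚ) (c : ZMod 2) :
    augF2Q (AddMonoidAlgebra.single q c) = c := by
  simp [augF2Q]

/-- The augmentation ideal `I = ker ε` of the group algebra `R = 𝔽₂[ℚ]` is idempotent: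
`I² = I`. -/
theorem augmentationIdeal_idem :
    RingHom.ker augF2Q * RingHom.ker augF2Q = RingHom.ker augF2Q := by
  apply le_antisymm (Ideal.mul_le_left)
  intro x hx
  have hx0 : augF2Q x = 0 := hx
  -- each single q 1 - 1 is in I*I
  have hgen : ∀ q : ℚ,
      (AddMonoidAlgebra.single q 1 - 1 : GroupRingF2Q) ∈
        RingHom.ker augF2Q * RingHom.ker augF2Q := by
    intro q
    set a : GroupRingF2Q := AddMonoidAlgebra.single (q/2) 1 with ha
    have hmem : a - 1 ∈ RingHom.ker augF2Q := by
      simp [RingHom.mem_ker, ha, augF2Q_single]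
    have h2 : (2 : GroupRingF2Q) = 0 := by
      have h := map_natCast (algebraMap (ZMod 2) GroupRingF2Q) 2
      have : ((2 : ℕ) : ZMod 2) = 0 := by decide
      rw [this, map_zero] at h
      simpa using h.symm
    have haa : a * a = AddMonoidAlgebra.single q 1 := by
      rw [ha, AddMonoidAlgebra.single_mul_single]
      norm_num
    have key : (a - 1) * (a - 1) = AddMonoidAlgebra.single q 1 - 1 := by
      rw [← haa]
      linear_combination (1 - a) * h2
    rw [← key]
    exact Ideal.mul_mem_mul hmem hmem
  -- express x as a combination of generators
  have hrep : x = x.coeff.sum fun q c => c • (AddMonoidAlgebra.single q 1 - 1 : GroupRingF2Q) := by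
    have h1 : (x.coeff.sum fun q c => c • (AddMonoidAlgebra.single q 1 - 1 : GroupRingF2Q))
        = (x.coeff.sum fun q c => AddMonoidAlgebra.single q c)
          - (x.coeff.sum fun q c => c • (1 : GroupRingF2Q)) := by
      rw [← Finsupp.sum_sub]
      congr 1
      ext q c
      rw [smul_sub, AddMonoidAlgebra.smul_single', mul_one]
    have h2 : (x.coeff.sum fun q c => AddMonoidAlgebra.single q c) = x := AddMonoidAlgebra.sum_coeff_single x
    have h3 : (x.coeff.sum fun q c => c • (1 : GroupRingF2Q)) = (augF2Q x) • 1 := by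
      conv_rhs => rw [← h2]
      rw [map_finsuppSum, Finsupp.sum, Finsupp.sum, Finset.sum_smul]
      exact Finset.sum_congr rfl fun q _ => by rw [augF2Q_single]
    rw [h1, h2, h3, hx0, zero_smul, sub_zero]
  rw [hrep]
  apply Submodule.sum_mem
  intro q _
  exact Submodule.smul_of_tower_mem _ _ (hgen q)
end
end
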